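/- The monic Laguerre polynomials L_n (with parameter b > 0) are orthogonal with respect to the gamma distribution: for m ≠ n, ∫_0^∞ L_m(x) L_n(x) γ_b(dx) = 0. -/

import Mathlib

/-- The monic Laguerre polynomial with parameter `b`, as a function of `x`. -/
noncomputable def laguerre (b : ℝ) (n : ℕ) (x : ℝ) : ℝ :=
  (ascPochhammer ℝ n).eval b *
    ∑ m ∈ Finset.range (n + 1),
      (-1 : ℝ) ^ (n - m) * (Nat.descFactorial n m : ℝ) /
        ((ascPochhammer ℝ m).eval b * (Nat.factorial m : ℝ)) * x ^ m

open MeasureTheory Real Set Finset Polynomial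

/-- The coefficient of `x ^ k` in the monic Laguerre polynomial, without the
`(ascPochhammer ℝ n).eval b` prefactor. -/
noncomputable def lagC (b : ℝ) (n k : ℕ) : ℝ :=
  (-1 : ℝ) ^ (n - k) * (Nat.descFactorial n k : ℝ) /
    ((ascPochhammer ℝ k).eval b * (Nat.factorial k : ℝ))

lemma gamma_weight_integrable {b : ℝ} (hb : 0 < b) (k : ℕ) :
    IntegrableOn (fun x : ℝ => x ^ k * (x ^ (b - 1) * Real.exp (-x))) (Set.Ioi 0) := by
  have h : (0:ℝ) < b + k := by positivity
  refine (Real.GammaIntegral_convergent h).congr_fun ?_ measurableSet_Ioi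
  intro x hx
  rw [Set.mem_Ioi] at hx
  simp only
  rw [show b + k - 1 = (k:ℝ) + (b-1) by ring, Real.rpow_add hx, Real.rpow_natCast]
  ring

lemma gamma_weight_integral {b : ℝ} (hb : 0 < b) (k : ℕ) :
    ∫ x in Set.Ioi (0:ℝ), x ^ k * (x ^ (b - 1) * Real.exp (-x)) = Real.Gamma (b + k) := by
  rw [Real.Gamma_eq_integral (by positivity : (0:ℝ) < b + k)]
  refine setIntegral_congr_fun measurableSet_Ioi ?_
  intro x hx
  rw [Set.mem_Ioi] at hx
  simp only
  rw [show b + k - 1 = (k:ℝ) + (b-1) by ring, Real.rpow_add hx, Real.rpow_natCast]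
  ring

lemma Gamma_add_nat' {b : ℝ} (hb : 0 < b) (k : ℕ) :
    Real.Gamma (b + k) = (ascPochhammer ℝ k).eval b * Real.Gamma b := by
  induction k with
  | zero => simp
  | succ k ih =>
    have h : b + ((k:ℕ)+1 : ℕ) = (b + k) + 1 := by push_cast; ring
    rw [h, Real.Gamma_add_one (show (0:ℝ) < b + k by positivity).ne', ih,
      ascPochhammer_succ_eval]
    ring

lemma fwdDiff_eval_comp (p : Polynomial ℝ) :
    fwdDiff (1:ℝ) (fun x => p.eval x) = fun x => (p.comp (X + C 1) - p).eval x := by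
  funext x
  simp [fwdDiff, eval_comp]

lemma fwdDiff_iter_eval_eq_zero : ∀ (n : ℕ) (p : Polynomial ℝ), p.degree < n →
    (fwdDiff (1:ℝ))^[n] (fun x => p.eval x) = 0 := by
  intro n
  induction n with
  | zero =>
    intro p hp
    have : p = 0 := by simpa using hp
    subst this
    simp [Function.iterate_zero]
    rfl
  | succ n ih =>
    intro p hp
    rw [Function.iterate_succ_apply, fwdDiff_eval_comp]
    set q := p.comp (X + C 1) - p with hq
    apply ih
    by_cases hq0 : q = 0
    · rw [hq0, degree_zero]
      exact bot_lt_iff_ne_bot.mpr (by simp)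
    by_cases hp0 : p = 0
    · exact absurd (by simp [hq, hp0]) hq0
    have hmono : (X + C (1:ℝ)).Monic := monic_X_add_C 1
    have hnd : (p.comp (X + C 1)).natDegree = p.natDegree := by
      rw [natDegree_comp, natDegree_X_add_C, mul_one]
    have hlc : (p.comp (X + C 1)).leadingCoeff = p.leadingCoeff := by
      rw [leadingCoeff_comp (by rw [natDegree_X_add_C]; exact one_ne_zero),
        hmono.leadingCoeff, one_pow, mul_one]
    have hc0 : p.comp (X + C 1) ≠ 0 := by
      intro h
      exact hp0 (leadingCoeff_eq_zero.mp (by rw [← hlc, h, leadingCoeff_zero]))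
    have hdeg : (p.comp (X + C 1)).degree = p.degree := by
      rw [degree_eq_natDegree hc0, degree_eq_natDegree hp0, hnd]
    have h1 : q.degree < p.degree := hdeg ▸ degree_sub_lt hdeg hc0 hlc
    have h2 : q.natDegree < p.natDegree := natDegree_lt_natDegree hq0 h1
    have h3 : p.natDegree < n + 1 := (natDegree_lt_iff_degree_lt hp0).mpr (by exact_mod_cast hp)
    exact (natDegree_lt_iff_degree_lt hq0).mp (by omega)

lemma alt_sum_poch (b : ℝ) {j n : ℕ} (hjn : j < n) :
    ∑ k ∈ Finset.range (n+1),
      (-1:ℝ)^(n-k) * (n.choose k) * (ascPochhammer ℝ j).eval (b + k) = 0 := by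
  have hdeg : (ascPochhammer ℝ j).degree < (n : ℕ) := by
    rw [degree_eq_natDegree (monic_ascPochhammer ℝ j).ne_zero, ascPochhammer_natDegree]
    exact_mod_cast hjn
  have h := fwdDiff_iter_eq_sum_shift (1:ℝ) (fun x => (ascPochhammer ℝ j).eval x) n b
  rw [fwdDiff_iter_eval_eq_zero n _ hdeg] at h
  simp only [Pi.zero_apply, nsmul_eq_mul, mul_one, zsmul_eq_mul] at h
  calc ∑ k ∈ Finset.range (n+1),
      (-1:ℝ)^(n-k) * (n.choose k) * (ascPochhammer ℝ j).eval (b + k)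
      = ∑ k ∈ Finset.range (n+1),
        (((-1:ℤ)^(n-k) * (n.choose k) : ℤ) : ℝ) * (ascPochhammer ℝ j).eval (b + k) :=
        Finset.sum_congr rfl (fun k _ => by push_cast; ring)
    _ = 0 := h.symm

lemma moment (b : ℝ) (hb : 0 < b) {i n : ℕ} (hin : i < n) :
    ∑ k ∈ Finset.range (n+1), lagC b n k * (ascPochhammer ℝ (i + k)).eval b = 0 := by
  rw [← alt_sum_poch b hin]
  apply Finset.sum_congr rfl
  intro k hk
  have hsplit : (ascPochhammer ℝ (i + k)).eval b
      = (ascPochhammer ℝ k).eval b * (ascPochhammer ℝ i).eval (b + k) := by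
    rw [add_comm i k, ← ascPochhammer_mul]
    simp [eval_comp]
  have hpos : 0 < (ascPochhammer ℝ k).eval b := ascPochhammer_pos k b hb
  have hfac : (Nat.factorial k : ℝ) ≠ 0 := by positivity
  have hdesc : (Nat.descFactorial n k : ℝ) = (Nat.choose n k : ℝ) * (Nat.factorial k : ℝ) := by
    rw [Nat.descFactorial_eq_factorial_mul_choose]; push_cast; ring
  rw [lagC, hsplit, hdesc]
  field_simp

lemma laguerre_orth_aux (b : ℝ) (hb : 0 < b) {m n : ℕ} (hmn : m < n) :
    ∫ x in Set.Ioi (0 : ℝ),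
        laguerre b m x * laguerre b n x * (x ^ (b - 1) * Real.exp (-x) / Real.Gamma b) = 0 := by
  set Am := (ascPochhammer ℝ m).eval b with hAm
  set An := (ascPochhammer ℝ n).eval b with hAn
  have hG : Real.Gamma b ≠ 0 := (Real.Gamma_pos_of_pos hb).ne'
  have hrep : ∀ x : ℝ,
      laguerre b m x * laguerre b n x * (x ^ (b - 1) * Real.exp (-x) / Real.Gamma b)
      = ∑ i ∈ Finset.range (m+1), ∑ j ∈ Finset.range (n+1),
          Am * lagC b m i * (An * lagC b n j) / Real.Gamma b
            * (x ^ (i + j) * (x ^ (b - 1) * Real.exp (-x))) := by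
    intro x
    simp only [laguerre, lagC, Finset.mul_sum, Finset.sum_mul]
    rw [Finset.sum_comm]
    refine Finset.sum_congr rfl fun i _ => Finset.sum_congr rfl fun j _ => by ring
  calc (∫ x in Set.Ioi (0 : ℝ),
        laguerre b m x * laguerre b n x * (x ^ (b - 1) * Real.exp (-x) / Real.Gamma b))
      = ∫ x in Set.Ioi (0 : ℝ), ∑ i ∈ Finset.range (m+1), ∑ j ∈ Finset.range (n+1),
          Am * lagC b m i * (An * lagC b n j) / Real.Gamma b
            * (x ^ (i + j) * (x ^ (b - 1) * Real.exp (-x))) := by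
        exact integral_congr_ae (Filter.Eventually.of_forall fun x => hrep x)
    _ = ∑ i ∈ Finset.range (m+1), ∑ j ∈ Finset.range (n+1),
          Am * lagC b m i * (An * lagC b n j) / Real.Gamma b
            * ∫ x in Set.Ioi (0 : ℝ), x ^ (i + j) * (x ^ (b - 1) * Real.exp (-x)) := by
        rw [integral_finset_sum _ (fun i _ => integrable_finset_sum _ (fun j _ =>
          ((gamma_weight_integrable hb (i + j)).const_mul _)))]
        refine Finset.sum_congr rfl fun i _ => ?_
        rw [integral_finset_sum _ (fun j _ => (gamma_weight_integrable hb (i + j)).const_mul _)]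
        exact Finset.sum_congr rfl fun j _ => integral_const_mul _ _
    _ = ∑ i ∈ Finset.range (m+1), (Am * lagC b m i * An) *
          ∑ j ∈ Finset.range (n+1), lagC b n j * (ascPochhammer ℝ (i + j)).eval b := by
        refine Finset.sum_congr rfl fun i _ => ?_
        rw [Finset.mul_sum]
        refine Finset.sum_congr rfl fun j _ => ?_
        rw [gamma_weight_integral hb (i + j), Gamma_add_nat' hb]
        field_simp
    _ = 0 := by
        refine Finset.sum_eq_zero fun i hi => ?_
        have hin : i < n := lt_of_le_of_lt (Nat.lt_succ_iff.mp (Finset.mem_range.mp hi)) hmn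
        rw [moment b hb hin, mul_zero]

/-- Orthogonality of the monic Laguerre polynomials with respect to the gamma
distribution `γ_b(dx) = x^(b-1) e^(-x)/Γ(b) dx` on `(0,∞)`: for `m ≠ n` the
integral of `L_m L_n` vanishes. -/
theorem laguerre_orthogonal (b : ℝ) (hb : 0 < b) (m n : ℕ) (hmn : m ≠ n) :
    ∫ x in Set.Ioi (0 : ℝ),
        laguerre b m x * laguerre b n x * (x ^ (b - 1) * Real.exp (-x) / Real.Gamma b) = 0 := by
  rcases hmn.lt_or_gt with h | h
  · exact laguerre_orth_aux b hb h
  · have h2 : (∫ x in Set.Ioi (0 : ℝ),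
        laguerre b m x * laguerre b n x * (x ^ (b - 1) * Real.exp (-x) / Real.Gamma b))
        = ∫ x in Set.Ioi (0 : ℝ),
        laguerre b n x * laguerre b m x * (x ^ (b - 1) * Real.exp (-x) / Real.Gamma b) := by
      apply integral_congr_ae
      filter_upwards with x
      ring
    rw [h2]
    exact laguerre_orth_aux b hb h
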